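/- Let K ≥ 1 and 1/2 < p₂ ≤ p₁ be real numbers, and let V̄ : (0,∞) → ℝ be a measurable locally bounded function with y^(2p₂) ≤ exp(2·V̄(y)) ≤ y^(2p₁) for all y ≥ K. Define recursively v⁰ ≡ 1 on [K,∞) and v^q(ξ) = 2q·∫_K^ξ exp(2·V̄(y₁)) · ( ∫_{y₁}^∞ v^{q−1}(y₂)·exp(−2·V̄(y₂)) dy₂ ) dy₁ for integers q ≥ 1. Then for every integer q with 1 ≤ q < q₀ := (1 + 2p₁)/(2(1 + p₁ − p₂)), all the integrals appearing in the definition of v^q are finite, and there exists a constant C_q (depending on q, p₁, p₂, K) such that v^q(ξ) ≤ C_q·ξ^(2q(1+p₁−p₂)) for all ξ ≥ K. -/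

import Mathlib

open MeasureTheory Set

/-- Auxiliary recursively defined comparison function. -/
noncomputable def gAux (K : ℝ) (Vbar : ℝ → ℝ) : ℕ → ℝ → ℝ
  | 0 => fun _ => 1
  | n + 1 => fun ξ =>
      2 * ((n : ℝ) + 1) * ∫ y₁ in K..ξ, Real.exp (2 * Vbar y₁) *
        ∫ y₂ in Set.Ioi y₁, gAux K Vbar n y₂ * Real.exp (-(2 * Vbar y₂))

/-- The inductive step. -/
theorem gAux_step (K p₁ p₂ : ℝ) (hK : 1 ≤ K) (hp₂ : 1 / 2 < p₂) (hp : p₂ ≤ p₁)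
    (Vbar : ℝ → ℝ) (hmeas : Measurable Vbar)
    (hlb : ∀ y : ℝ, K ≤ y → y ^ (2 * p₂) ≤ Real.exp (2 * Vbar y))
    (hub : ∀ y : ℝ, K ≤ y → Real.exp (2 * Vbar y) ≤ y ^ (2 * p₁))
    (n : ℕ) (C : ℝ) (hC : 0 ≤ C)
    (hmono : MonotoneOn (gAux K Vbar n) (Set.Ici K))
    (hnn : ∀ ξ : ℝ, K ≤ ξ → 0 ≤ gAux K Vbar n ξ)
    (hbd : ∀ ξ : ℝ, K ≤ ξ → gAux K Vbar n ξ ≤ C * ξ ^ (2 * (n : ℝ) * (1 + p₁ - p₂)))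
    (hα : 2 * (n : ℝ) * (1 + p₁ - p₂) < 2 * p₂ - 1) :
    (∀ y₁ : ℝ, K ≤ y₁ →
        IntegrableOn (fun y₂ => gAux K Vbar n y₂ * Real.exp (-(2 * Vbar y₂))) (Set.Ioi y₁)) ∧
    (∀ ξ : ℝ, K ≤ ξ → IntervalIntegrable
        (fun y₁ => Real.exp (2 * Vbar y₁) *
          ∫ y₂ in Set.Ioi y₁, gAux K Vbar n y₂ * Real.exp (-(2 * Vbar y₂))) volume K ξ) ∧
    MonotoneOn (gAux K Vbar (n + 1)) (Set.Ici K) ∧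
    (∀ ξ : ℝ, K ≤ ξ → 0 ≤ gAux K Vbar (n + 1) ξ) ∧
    (∃ C' : ℝ, 0 ≤ C' ∧ ∀ ξ : ℝ, K ≤ ξ →
      gAux K Vbar (n + 1) ξ ≤ C' * ξ ^ (2 * ((n : ℝ) + 1) * (1 + p₁ - p₂))) := by
  have hd : (0 : ℝ) < 1 + p₁ - p₂ := by linarith
  set a : ℝ := 2 * (n : ℝ) * (1 + p₁ - p₂) with ha_def
  have ha0 : 0 ≤ a := by
    have : (0 : ℝ) ≤ (n : ℝ) := Nat.cast_nonneg n
    positivity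
  set s : ℝ := a - 2 * p₂ with hs_def
  have hs : s < -1 := by simp only [hs_def]; linarith
  have hs1 : s + 1 < 0 := by linarith
  set f : ℝ → ℝ := fun y₂ => gAux K Vbar n y₂ * Real.exp (-(2 * Vbar y₂)) with hf_def
  -- positivity of points
  have hpos : ∀ y : ℝ, K ≤ y → (0 : ℝ) < y := fun y hy => lt_of_lt_of_le one_pos (hK.trans hy)
  -- exp bound
  have hexpneg : ∀ y : ℝ, K ≤ y → Real.exp (-(2 * Vbar y)) ≤ y ^ (-(2 * p₂)) := by
    intro y hy
    rw [Real.exp_neg, Real.rpow_neg (hpos y hy).le]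
    exact inv_anti₀ (Real.rpow_pos_of_pos (hpos y hy) _) (hlb y hy)
  -- pointwise bound on f
  have hfbd : ∀ y : ℝ, K ≤ y → f y ≤ C * y ^ s := by
    intro y hy
    have hy0 := hpos y hy
    calc f y ≤ (C * y ^ a) * (y ^ (-(2 * p₂))) := by
          apply mul_le_mul (hbd y hy) (hexpneg y hy) (Real.exp_pos _).le
          positivity
      _ = C * y ^ s := by
          rw [mul_assoc, ← Real.rpow_add hy0, show a + -(2 * p₂) = s from by rw [hs_def]; ring]
  have hfnn : ∀ y : ℝ, K ≤ y → 0 ≤ f y :=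
    fun y hy => mul_nonneg (hnn y hy) (Real.exp_pos _).le
  -- measurable extension
  have hMmono : Monotone (fun y => gAux K Vbar n (max y K)) := by
    intro y y' hyy'
    exact hmono (le_max_right y K) (le_max_right y' K) (max_le_max hyy' le_rfl)
  have hMmeas : Measurable (fun y => gAux K Vbar n (max y K)) := hMmono.measurable
  have hEmeas : Measurable (fun y => Real.exp (-(2 * Vbar y))) :=
    Real.measurable_exp.comp ((measurable_const.mul hmeas).neg)
  have hFMmeas : Measurable (fun y => gAux K Vbar n (max y K) * Real.exp (-(2 * Vbar y))) :=
    hMmeas.mul hEmeas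
  have hfeq : ∀ y : ℝ, K ≤ y → gAux K Vbar n (max y K) * Real.exp (-(2 * Vbar y)) = f y := by
    intro y hy; rw [max_eq_left hy]
  -- tail integrability
  have hdom : ∀ y₁ : ℝ, K ≤ y₁ → IntegrableOn (fun y => C * y ^ s) (Set.Ioi y₁) :=
    fun y₁ hy₁ => (integrableOn_Ioi_rpow_of_lt hs (hpos y₁ hy₁)).const_mul C
  have hint : ∀ y₁ : ℝ, K ≤ y₁ → IntegrableOn f (Set.Ioi y₁) := by
    intro y₁ hy₁
    have h1 : IntegrableOn (fun y => gAux K Vbar n (max y K) * Real.exp (-(2 * Vbar y)))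
        (Set.Ioi y₁) := by
      refine Integrable.mono' (hdom y₁ hy₁) hFMmeas.aestronglyMeasurable ?_
      refine (ae_restrict_iff' measurableSet_Ioi).2 (Filter.Eventually.of_forall ?_)
      intro y hy
      have hKy : K ≤ y := hy₁.trans (le_of_lt hy)
      rw [hfeq y hKy, Real.norm_eq_abs, abs_of_nonneg (hfnn y hKy)]
      exact hfbd y hKy
    exact h1.congr_fun (fun y hy => hfeq y (hy₁.trans (le_of_lt hy))) measurableSet_Ioi
  -- tail integral bound
  set D : ℝ := C / (-(s + 1)) with hD_def
  have hD0 : 0 ≤ D := div_nonneg hC (by linarith)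
  have htailbd : ∀ y₁ : ℝ, K ≤ y₁ → ∫ y in Set.Ioi y₁, f y ≤ D * y₁ ^ (s + 1) := by
    intro y₁ hy₁
    have h1 : ∫ y in Set.Ioi y₁, f y ≤ ∫ y in Set.Ioi y₁, C * y ^ s := by
      refine setIntegral_mono_on (hint y₁ hy₁) (hdom y₁ hy₁) measurableSet_Ioi ?_
      intro y hy; exact hfbd y (hy₁.trans (le_of_lt hy))
    have h2 : ∫ y in Set.Ioi y₁, C * y ^ s = C * (-y₁ ^ (s + 1) / (s + 1)) := by
      rw [MeasureTheory.integral_const_mul, integral_Ioi_rpow_of_lt hs (hpos y₁ hy₁)]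
    have h3 : C * (-y₁ ^ (s + 1) / (s + 1)) = D * y₁ ^ (s + 1) := by
      rw [hD_def, div_neg]; ring
    linarith [h1, h2.le, h3.le]
  have htailnn : ∀ y₁ : ℝ, K ≤ y₁ → 0 ≤ ∫ y in Set.Ioi y₁, f y := by
    intro y₁ hy₁
    exact setIntegral_nonneg measurableSet_Ioi (fun y hy => hfnn y (hy₁.trans (le_of_lt hy)))
  -- measurability of the tail integral function (via antitone extension)
  have hIanti : Antitone (fun t => ∫ y in Set.Ioi (max t K), f y) := by
    intro t t' htt'
    refine setIntegral_mono_set (hint (max t K) (le_max_right t K)) ?_ ?_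
    · refine (ae_restrict_iff' measurableSet_Ioi).2 (Filter.Eventually.of_forall ?_)
      intro y hy; exact hfnn y ((le_max_right t K).trans (le_of_lt hy))
    · exact HasSubset.Subset.eventuallyLE (Set.Ioi_subset_Ioi (max_le_max htt' le_rfl))
  have hImeas : Measurable (fun t => ∫ y in Set.Ioi (max t K), f y) := hIanti.measurable
  -- the outer integrand
  set F : ℝ → ℝ := fun y₁ => Real.exp (2 * Vbar y₁) * ∫ y₂ in Set.Ioi y₁, f y₂ with hF_def
  have hFeq : ∀ y₁ : ℝ, K ≤ y₁ →
      Real.exp (2 * Vbar y₁) * (∫ y in Set.Ioi (max y₁ K), f y) = F y₁ := by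
    intro y₁ hy₁; rw [max_eq_left hy₁]
  have hFMmeas2 : Measurable (fun y₁ => Real.exp (2 * Vbar y₁) *
      ∫ y in Set.Ioi (max y₁ K), f y) :=
    (Real.measurable_exp.comp (measurable_const.mul hmeas)).mul hImeas
  set b : ℝ := 2 * p₁ + (s + 1) with hb_def
  have hb0 : 0 ≤ b := by simp only [hb_def, hs_def]; linarith
  have hFnn : ∀ y₁ : ℝ, K ≤ y₁ → 0 ≤ F y₁ :=
    fun y₁ hy₁ => mul_nonneg (Real.exp_pos _).le (htailnn y₁ hy₁)
  have hFbd : ∀ y₁ : ℝ, K ≤ y₁ → F y₁ ≤ D * y₁ ^ b := by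
    intro y₁ hy₁
    have hy0 := hpos y₁ hy₁
    calc F y₁ ≤ y₁ ^ (2 * p₁) * (D * y₁ ^ (s + 1)) := by
          exact mul_le_mul (hub y₁ hy₁) (htailbd y₁ hy₁) (htailnn y₁ hy₁)
            (Real.rpow_nonneg hy0.le _)
      _ = D * y₁ ^ b := by
          rw [show y₁ ^ (2 * p₁) * (D * y₁ ^ (s + 1)) = D * (y₁ ^ (2 * p₁) * y₁ ^ (s + 1))
              from by ring, ← Real.rpow_add hy0]
  -- interval integrability of F
  have hFint : ∀ ξ : ℝ, K ≤ ξ → IntervalIntegrable F volume K ξ := by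
    intro ξ hξ
    rw [intervalIntegrable_iff_integrableOn_Ioc_of_le hξ]
    have hconst : IntegrableOn (fun _ : ℝ => D * ξ ^ b) (Set.Ioc K ξ) :=
      integrableOn_const measure_Ioc_lt_top.ne enorm_ne_top
    have h1 : IntegrableOn (fun y₁ => Real.exp (2 * Vbar y₁) *
        ∫ y in Set.Ioi (max y₁ K), f y) (Set.Ioc K ξ) := by
      refine Integrable.mono' hconst hFMmeas2.aestronglyMeasurable ?_
      refine (ae_restrict_iff' measurableSet_Ioc).2 (Filter.Eventually.of_forall ?_)
      intro y₁ hy₁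
      have hKy : K ≤ y₁ := le_of_lt hy₁.1
      rw [hFeq y₁ hKy, Real.norm_eq_abs, abs_of_nonneg (hFnn y₁ hKy)]
      calc F y₁ ≤ D * y₁ ^ b := hFbd y₁ hKy
        _ ≤ D * ξ ^ b := by
            exact mul_le_mul_of_nonneg_left
              (Real.rpow_le_rpow (hpos y₁ hKy).le hy₁.2 hb0) hD0
    exact h1.congr_fun (fun y₁ hy₁ => hFeq y₁ (le_of_lt hy₁.1)) measurableSet_Ioc
  -- rewrite gAux (n+1)
  have hg1 : ∀ ξ : ℝ, gAux K Vbar (n + 1) ξ = 2 * ((n : ℝ) + 1) * ∫ y₁ in K..ξ, F y₁ := by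
    intro ξ; rfl
  have hcoef : (0 : ℝ) ≤ 2 * ((n : ℝ) + 1) := by positivity
  -- nonnegativity
  have hnn1 : ∀ ξ : ℝ, K ≤ ξ → 0 ≤ gAux K Vbar (n + 1) ξ := by
    intro ξ hξ
    rw [hg1]
    refine mul_nonneg hcoef ?_
    exact intervalIntegral.integral_nonneg hξ (fun u hu => hFnn u hu.1)
  -- monotonicity
  have hmono1 : MonotoneOn (gAux K Vbar (n + 1)) (Set.Ici K) := by
    intro ξ₁ hξ₁ ξ₂ hξ₂ h12
    rw [hg1, hg1]
    refine mul_le_mul_of_nonneg_left ?_ hcoef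
    have hi1 : IntervalIntegrable F volume K ξ₁ := hFint ξ₁ hξ₁
    have hi2 : IntervalIntegrable F volume ξ₁ ξ₂ := by
      refine (hFint ξ₂ hξ₂).mono_set ?_
      rw [Set.uIcc_of_le h12, Set.uIcc_of_le hξ₂]
      exact Set.Icc_subset_Icc hξ₁ le_rfl
    rw [← intervalIntegral.integral_add_adjacent_intervals hi1 hi2]
    have : 0 ≤ ∫ y₁ in ξ₁..ξ₂, F y₁ :=
      intervalIntegral.integral_nonneg h12 (fun u hu => hFnn u (hξ₁.trans hu.1))
    linarith
  -- bound
  refine ⟨hint, hFint, hmono1, hnn1, ⟨2 * ((n : ℝ) + 1) * D, by positivity, ?_⟩⟩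
  intro ξ hξ
  have hξ0 := hpos ξ hξ
  rw [hg1]
  have h1 : ∫ y₁ in K..ξ, F y₁ ≤ ∫ _ in K..ξ, D * ξ ^ b := by
    refine intervalIntegral.integral_mono_on hξ (hFint ξ hξ) intervalIntegrable_const ?_
    intro u hu
    calc F u ≤ D * u ^ b := hFbd u hu.1
      _ ≤ D * ξ ^ b := mul_le_mul_of_nonneg_left
          (Real.rpow_le_rpow (hpos u hu.1).le hu.2 hb0) hD0
  have h2 : ∫ _ in K..ξ, D * ξ ^ b = (ξ - K) * (D * ξ ^ b) := by
    rw [intervalIntegral.integral_const]; simp [smul_eq_mul]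
  have h3 : (ξ - K) * (D * ξ ^ b) ≤ ξ * (D * ξ ^ b) := by
    refine mul_le_mul_of_nonneg_right (by linarith) ?_
    positivity
  have h4 : ξ * (D * ξ ^ b) = D * ξ ^ (b + 1) := by
    rw [Real.rpow_add hξ0 b 1, Real.rpow_one]; ring
  have h5 : b + 1 = 2 * ((n : ℝ) + 1) * (1 + p₁ - p₂) := by
    simp only [hb_def, hs_def, ha_def]; ring
  calc 2 * ((n : ℝ) + 1) * ∫ y₁ in K..ξ, F y₁
      ≤ 2 * ((n : ℝ) + 1) * (ξ * (D * ξ ^ b)) := by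
        refine mul_le_mul_of_nonneg_left ?_ hcoef
        linarith [h1, h2.le, h3]
    _ = 2 * ((n : ℝ) + 1) * D * ξ ^ (2 * ((n : ℝ) + 1) * (1 + p₁ - p₂)) := by
        rw [h4, ← h5]; ring


/-- Under `y^(2p₂) ≤ exp(2·V̄(y)) ≤ y^(2p₁)` for `y ≥ K` (with
`K ≥ 1`, `1/2 < p₂ ≤ p₁`), define recursively `v⁰ ≡ 1` on `[K,∞)` and
`v^q(ξ) = 2q·∫_K^ξ e^{2V̄(y₁)} (∫_{y₁}^∞ v^{q−1}(y₂) e^{−2V̄(y₂)} dy₂) dy₁`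
for integers `q ≥ 1`.  Then for every integer `q` with
`1 ≤ q < q₀ = (1 + 2p₁)/(2(1 + p₁ − p₂))`, all the integrals appearing in
the definition of `v^q` are finite, and there is a constant `C_q` with
`v^q(ξ) ≤ C_q·ξ^(2q(1+p₁−p₂))` for all `ξ ≥ K`. -/
theorem hitting_time_moments_polynomial_bound
    (K p₁ p₂ : ℝ) (hK : 1 ≤ K) (hp₂ : 1 / 2 < p₂) (hp : p₂ ≤ p₁)
    (Vbar : ℝ → ℝ) (hmeas : Measurable Vbar)
    (hloc : ∀ a b : ℝ, 0 < a → ∃ M : ℝ, ∀ y ∈ Set.Icc a b, |Vbar y| ≤ M)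
    (hlb : ∀ y : ℝ, K ≤ y → y ^ (2 * p₂) ≤ Real.exp (2 * Vbar y))
    (hub : ∀ y : ℝ, K ≤ y → Real.exp (2 * Vbar y) ≤ y ^ (2 * p₁))
    (v : ℕ → ℝ → ℝ)
    (hv0 : ∀ ξ : ℝ, K ≤ ξ → v 0 ξ = 1)
    (hvrec : ∀ q : ℕ, 1 ≤ q → ∀ ξ : ℝ, K ≤ ξ →
      v q ξ = 2 * q * ∫ y₁ in K..ξ, Real.exp (2 * Vbar y₁) *
        ∫ y₂ in Set.Ioi y₁, v (q - 1) y₂ * Real.exp (-(2 * Vbar y₂)))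
    (q : ℕ) (hq1 : 1 ≤ q)
    (hq : (q : ℝ) < (1 + 2 * p₁) / (2 * (1 + p₁ - p₂))) :
    (∀ q' : ℕ, 1 ≤ q' → q' ≤ q →
      (∀ y₁ : ℝ, K ≤ y₁ →
          IntegrableOn
            (fun y₂ => v (q' - 1) y₂ * Real.exp (-(2 * Vbar y₂)))
            (Set.Ioi y₁)) ∧
        ∀ ξ : ℝ, K ≤ ξ →
          IntervalIntegrable
            (fun y₁ => Real.exp (2 * Vbar y₁) *
              ∫ y₂ in Set.Ioi y₁, v (q' - 1) y₂ * Real.exp (-(2 * Vbar y₂)))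
            volume K ξ) ∧
      ∃ Cq : ℝ, ∀ ξ : ℝ, K ≤ ξ →
        v q ξ ≤ Cq * ξ ^ (2 * (q : ℝ) * (1 + p₁ - p₂)) := by
  have hd : (0 : ℝ) < 1 + p₁ - p₂ := by linarith
  -- the exponent condition
  have hαlt : ∀ n : ℕ, n + 1 ≤ q → 2 * (n : ℝ) * (1 + p₁ - p₂) < 2 * p₂ - 1 := by
    intro n hn
    have h1 : ((n : ℝ) + 1) ≤ (q : ℝ) := by exact_mod_cast hn
    have h2 : (q : ℝ) * (2 * (1 + p₁ - p₂)) < 1 + 2 * p₁ :=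
      (lt_div_iff₀ (by linarith)).1 hq
    nlinarith [mul_le_mul_of_nonneg_right h1 hd.le]
  -- inductive properties of gAux
  have hP : ∀ n : ℕ, n ≤ q →
      MonotoneOn (gAux K Vbar n) (Set.Ici K) ∧
      (∀ ξ : ℝ, K ≤ ξ → 0 ≤ gAux K Vbar n ξ) ∧
      ∃ C : ℝ, 0 ≤ C ∧ ∀ ξ : ℝ, K ≤ ξ →
        gAux K Vbar n ξ ≤ C * ξ ^ (2 * (n : ℝ) * (1 + p₁ - p₂)) := by
    intro n
    induction n with
    | zero =>
      intro _
      refine ⟨fun x _ y _ _ => le_rfl, fun ξ _ => zero_le_one, 1, zero_le_one, ?_⟩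
      intro ξ hξ
      simp only [gAux, Nat.cast_zero]
      norm_num
    | succ n ih =>
      intro hn
      obtain ⟨hm, hn0, C, hC, hb⟩ := ih (by omega)
      have hst := gAux_step K p₁ p₂ hK hp₂ hp Vbar hmeas hlb hub n C hC hm hn0 hb (hαlt n hn)
      refine ⟨hst.2.2.1, hst.2.2.2.1, ?_⟩
      obtain ⟨C', hC', hbd'⟩ := hst.2.2.2.2
      refine ⟨C', hC', ?_⟩
      intro ξ hξ
      have := hbd' ξ hξ
      push_cast
      exact this
  -- v coincides with gAux on [K, ∞)
  have hvg : ∀ n : ℕ, ∀ ξ : ℝ, K ≤ ξ → v n ξ = gAux K Vbar n ξ := by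
    intro n
    induction n with
    | zero => intro ξ hξ; rw [hv0 ξ hξ]; rfl
    | succ n ih =>
      intro ξ hξ
      rw [hvrec (n + 1) (by omega) ξ hξ,
        show gAux K Vbar (n + 1) ξ = 2 * ((n : ℝ) + 1) * ∫ y₁ in K..ξ,
          Real.exp (2 * Vbar y₁) *
            ∫ y₂ in Set.Ioi y₁, gAux K Vbar n y₂ * Real.exp (-(2 * Vbar y₂)) from rfl]
      simp only [Nat.add_sub_cancel]
      congr 1
      · push_cast; ring
      apply intervalIntegral.integral_congr
      intro y₁ hy₁
      rw [Set.uIcc_of_le hξ] at hy₁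
      simp only
      congr 1
      apply setIntegral_congr_fun measurableSet_Ioi
      intro y₂ hy₂
      simp only
      rw [ih y₂ (hy₁.1.trans (le_of_lt hy₂))]
  constructor
  · intro q' hq'1 hq'q
    obtain ⟨hm, hn0, C, hC, hb⟩ := hP (q' - 1) (by omega)
    have hst := gAux_step K p₁ p₂ hK hp₂ hp Vbar hmeas hlb hub (q' - 1) C hC hm hn0 hb
      (hαlt (q' - 1) (by omega))
    constructor
    · intro y₁ hy₁
      refine (hst.1 y₁ hy₁).congr_fun ?_ measurableSet_Ioi
      intro y₂ hy₂
      simp only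
      rw [hvg (q' - 1) y₂ (hy₁.trans (le_of_lt hy₂))]
    · intro ξ hξ
      rw [intervalIntegrable_iff_integrableOn_Ioc_of_le hξ]
      have h0 := hst.2.1 ξ hξ
      rw [intervalIntegrable_iff_integrableOn_Ioc_of_le hξ] at h0
      refine h0.congr_fun ?_ measurableSet_Ioc
      intro y₁ hy₁
      simp only
      congr 1
      apply setIntegral_congr_fun measurableSet_Ioi
      intro y₂ hy₂
      simp only
      rw [hvg (q' - 1) y₂ ((le_of_lt hy₁.1).trans (le_of_lt hy₂))]
  · obtain ⟨hm, hn0, C, hC, hb⟩ := hP q le_rfl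
    exact ⟨C, fun ξ hξ => by rw [hvg q ξ hξ]; exact hb ξ hξ⟩
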